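/- Let Q be the linear operator on a 2-dimensional complex inner product space with orthonormal-like basis vectors Ψ₁, Ψ₀ (with ⟨Ψ₁,Ψ₁⟩ = a, ⟨Ψ₀,Ψ₀⟩ = 1−a, ⟨Ψ₁,Ψ₀⟩ = 0, 0 < a < 1) defined by Q Ψ₁ = (1−2a)Ψ₁ − 2a Ψ₀ and Q Ψ₀ = 2(1−a)Ψ₁ + (1−2a)Ψ₀. Then the vectors Ψ± = (1/√2)(Ψ₁/√a ± (i/√(1−a))Ψ₀) are eigenvectors of Q with eigenvalues e^{±2iθ}, where sin²(θ) = a and 0 < θ < π/2. -/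

import Mathlib

open Complex

theorem grover_eigenvectors {H : Type*} [NormedAddCommGroup H] [InnerProductSpace ℂ H]
    (Q : H →ₗ[ℂ] H) (Ψ₁ Ψ₀ : H) (a θ : ℝ)
    (ha0 : 0 < a) (ha1 : a < 1)
    (hθ0 : 0 < θ) (hθ1 : θ < Real.pi / 2) (hsin : Real.sin θ ^ 2 = a)
    (hnorm1 : @inner ℂ H _ Ψ₁ Ψ₁ = (a : ℂ))
    (hnorm0 : @inner ℂ H _ Ψ₀ Ψ₀ = ((1 - a : ℝ) : ℂ))
    (horth : @inner ℂ H _ Ψ₁ Ψ₀ = 0)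
    (hQ1 : Q Ψ₁ = ((1 - 2 * a : ℝ) : ℂ) • Ψ₁ - ((2 * a : ℝ) : ℂ) • Ψ₀)
    (hQ0 : Q Ψ₀ = ((2 * (1 - a) : ℝ) : ℂ) • Ψ₁ + ((1 - 2 * a : ℝ) : ℂ) • Ψ₀) :
    Q (((1 / Real.sqrt 2 : ℝ) : ℂ) •
        (((1 / Real.sqrt a : ℝ) : ℂ) • Ψ₁ + (Complex.I / (Real.sqrt (1 - a) : ℂ)) • Ψ₀)) =
      Complex.exp (2 * Complex.I * θ) • (((1 / Real.sqrt 2 : ℝ) : ℂ) •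
        (((1 / Real.sqrt a : ℝ) : ℂ) • Ψ₁ + (Complex.I / (Real.sqrt (1 - a) : ℂ)) • Ψ₀)) ∧
    Q (((1 / Real.sqrt 2 : ℝ) : ℂ) •
        (((1 / Real.sqrt a : ℝ) : ℂ) • Ψ₁ - (Complex.I / (Real.sqrt (1 - a) : ℂ)) • Ψ₀)) =
      Complex.exp (-(2 * Complex.I * θ)) • (((1 / Real.sqrt 2 : ℝ) : ℂ) •
        (((1 / Real.sqrt a : ℝ) : ℂ) • Ψ₁ - (Complex.I / (Real.sqrt (1 - a) : ℂ)) • Ψ₀)) := by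
  have hpi := Real.pi_pos
  have hs : Real.sin θ = Real.sqrt a := by
    rw [← hsin]
    exact (Real.sqrt_sq (Real.sin_nonneg_of_nonneg_of_le_pi hθ0.le (by linarith))).symm
  have hcos2 : Real.cos θ ^ 2 = 1 - a := by
    have := Real.sin_sq_add_cos_sq θ
    linarith
  have hcpos : 0 < Real.cos θ := Real.cos_pos_of_mem_Ioo ⟨by linarith, hθ1⟩
  have hc : Real.cos θ = Real.sqrt (1 - a) := by
    rw [← hcos2]
    exact (Real.sqrt_sq hcpos.le).symm
  have hsa : ((Real.sqrt a : ℝ) : ℂ) ^ 2 = (a : ℂ) := by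
    norm_cast; exact Real.sq_sqrt ha0.le
  have hsc : ((Real.sqrt (1 - a) : ℝ) : ℂ) ^ 2 = ((1 - a : ℝ) : ℂ) := by
    norm_cast; exact Real.sq_sqrt (by linarith)
  have hsane : ((Real.sqrt a : ℝ) : ℂ) ≠ 0 := by
    norm_cast; positivity
  have hscne : ((Real.sqrt (1 - a) : ℝ) : ℂ) ≠ 0 := by
    norm_cast; exact Real.sqrt_ne_zero'.mpr (by linarith)
  have hexp : Complex.exp (2 * Complex.I * θ)
      = ((1 - 2 * a : ℝ) : ℂ) + ((2 * Real.sqrt a * Real.sqrt (1 - a) : ℝ) : ℂ) * Complex.I := by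
    rw [show (2 * Complex.I * (θ : ℂ)) = ((2 * θ : ℝ) : ℂ) * Complex.I by push_cast; ring,
      Complex.exp_mul_I, ← Complex.ofReal_cos, ← Complex.ofReal_sin,
      Real.cos_two_mul, Real.sin_two_mul, hs, hc, Real.sq_sqrt (show (0:ℝ) ≤ 1 - a by linarith)]
    push_cast; ring
  have hexp' : Complex.exp (-(2 * Complex.I * θ))
      = ((1 - 2 * a : ℝ) : ℂ) - ((2 * Real.sqrt a * Real.sqrt (1 - a) : ℝ) : ℂ) * Complex.I := by
    rw [show -(2 * Complex.I * (θ : ℂ)) = ((-(2 * θ) : ℝ) : ℂ) * Complex.I by push_cast; ring,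
      Complex.exp_mul_I, ← Complex.ofReal_cos, ← Complex.ofReal_sin,
      Real.cos_neg, Real.sin_neg,
      Real.cos_two_mul, Real.sin_two_mul, hs, hc, Real.sq_sqrt (show (0:ℝ) ≤ 1 - a by linarith)]
    push_cast; ring
  have hsc2 : ((Real.sqrt (1 - a) : ℝ) : ℂ) ^ 2 = 1 - (a : ℂ) := by
    rw [hsc]; push_cast; ring
  constructor
  · rw [map_smul, map_add, map_smul, map_smul, hQ1, hQ0, hexp]
    match_scalars
    · field_simp
      linear_combination (-2 * Complex.I * ((Real.sqrt a:ℝ):ℂ)) * hsc2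
    · field_simp
      linear_combination (2 * ((Real.sqrt (1-a):ℝ):ℂ)) * hsa + (-2 * ((Real.sqrt a:ℝ):ℂ)^2 * ((Real.sqrt (1-a):ℝ):ℂ)) * Complex.I_sq
  · rw [map_smul, map_sub, map_smul, map_smul, hQ1, hQ0, hexp']
    match_scalars
    · field_simp
      linear_combination (2 * Complex.I * ((Real.sqrt a:ℝ):ℂ)) * hsc2
    · field_simp
      linear_combination (2 * ((Real.sqrt (1-a):ℝ):ℂ)) * hsa + (-2 * ((Real.sqrt a:ℝ):ℂ)^2 * ((Real.sqrt (1-a):ℝ):ℂ)) * Complex.I_sq
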